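/- Let G be a finite group, x ∈ G an element of odd prime order, X = x^G its conjugacy class, and Γ_X the commuting graph on X. Suppose A and B are subgroups of G such that every element of A commutes with every element of B, x ∈ A, the product U = AB is a subgroup, and there exists g ∈ G with g⁻¹Ag ≤ B. Then ⟨U, g⟩ ≤ H_x; in particular, every element of the subgroup generated by U and g maps the connected component of x in Γ_X to itself under conjugation, and x and g⁻¹xg lie in the same connected component of Γ_X. -/

import Mathlib

open SimpleGraph

/-- The commuting graph on a subset `X` of a group `G`: vertices are the elements of `X`,
and two distinct vertices are adjacent iff they commute. -/
def commGraph {G : Type*} [Group G] (X : Set G) : SimpleGraph X where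
  Adj a b := a ≠ b ∧ (a : G) * (b : G) = (b : G) * (a : G)
  symm := ⟨fun a b h => ⟨h.1.symm, h.2.symm⟩⟩
  loopless := ⟨fun a h => h.1 rfl⟩

/-- The connected component of `x` in the commuting graph on `X`, viewed as a subset of `G`. -/
def compSet {G : Type*} [Group G] (X : Set G) (x : G) (hx : x ∈ X) : Set G :=
  {y : G | ∃ hy : y ∈ X, (commGraph X).Reachable ⟨x, hx⟩ ⟨y, hy⟩}

/-- The stabilizer `H_x` in `G` of the connected component of `x` in the commuting graph on `X`,
under the conjugation action. -/
def conjStab {G : Type*} [Group G] (X : Set G) (x : G) (hx : x ∈ X) : Set G :=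
  {g : G | (fun y => g⁻¹ * y * g) '' compSet X x hx = compSet X x hx}

lemma commGraph_reach_conj {G : Type*} [Group G] (X : Set G) (h : G)
    (hX : ∀ y ∈ X, h⁻¹ * y * h ∈ X) {a b : X}
    (hr : (commGraph X).Reachable a b) :
    (commGraph X).Reachable ⟨h⁻¹ * a * h, hX a a.2⟩ ⟨h⁻¹ * b * h, hX b b.2⟩ := by
  let φ : commGraph X →g commGraph X :=
    { toFun := fun y => ⟨h⁻¹ * y * h, hX y y.2⟩
      map_rel' := by
        rintro ⟨u, hu⟩ ⟨v, hv⟩ ⟨hne, hc⟩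
        refine ⟨?_, ?_⟩
        · intro heq
          apply hne
          have h1 : h⁻¹ * u * h = h⁻¹ * v * h := congrArg Subtype.val heq
          have : u = v := mul_left_cancel (mul_right_cancel h1)
          exact Subtype.ext this
        · show (h⁻¹ * u * h) * (h⁻¹ * v * h) = (h⁻¹ * v * h) * (h⁻¹ * u * h)
          have e1 : (h⁻¹ * u * h) * (h⁻¹ * v * h) = h⁻¹ * (u * v) * h := by group
          have e2 : (h⁻¹ * v * h) * (h⁻¹ * u * h) = h⁻¹ * (v * u) * h := by group
          rw [e1, e2, hc] }
  exact hr.map φ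

lemma commGraph_reach_congr {G : Type*} [Group G] (X : Set G)
    {y z y' z' : G} (hy : y ∈ X) (hz : z ∈ X) (hy' : y' ∈ X) (hz' : z' ∈ X)
    (e1 : y = y') (e2 : z = z')
    (hr : (commGraph X).Reachable ⟨y, hy⟩ ⟨z, hz⟩) :
    (commGraph X).Reachable ⟨y', hy'⟩ ⟨z', hz'⟩ := by
  subst e1; subst e2; exact hr

/-- Let `x` be an element of odd prime order in a finite group `G`, `X = x^G` its conjugacy
class. Suppose `A` and `B` are commuting subgroups, `x ∈ A`, `U = AB` (= `A ⊔ B`), and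
`g ∈ G` satisfies `g⁻¹Ag ≤ B`. Then `⟨U, g⟩ ≤ H_x`, the stabilizer of the connected
component of `x` in the commuting graph on `X` under conjugation; in particular, `x` and
`g⁻¹ * x * g` lie in the same connected component of `Γ_X`. -/
theorem conjStab_ge_of_commuting_factorization
    {G : Type*} [Group G] [Finite G] (x : G)
    (hprime : (orderOf x).Prime) (hodd : Odd (orderOf x))
    (A B : Subgroup G) (hcomm : ∀ a ∈ A, ∀ b ∈ B, a * b = b * a)
    (hxA : x ∈ A) (g : G) (hg : ∀ a ∈ A, g⁻¹ * a * g ∈ B) :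
    (∀ h ∈ (A ⊔ B) ⊔ Subgroup.zpowers g,
        h ∈ conjStab {y : G | IsConj x y} x (IsConj.refl x)) ∧
      (commGraph {y : G | IsConj x y}).Reachable ⟨x, IsConj.refl x⟩
        ⟨g⁻¹ * x * g, isConj_iff.mpr ⟨g⁻¹, by group⟩⟩ := by
  set X : Set G := {y : G | IsConj x y} with hXdef
  have hx : x ∈ X := IsConj.refl x
  have hXconj : ∀ (h : G), ∀ y ∈ X, h⁻¹ * y * h ∈ X := by
    intro h y hy
    exact hy.trans (isConj_iff.mpr ⟨h⁻¹, by group⟩)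
  -- commuting elements of X are reachable
  have hrc : ∀ (y z : G) (hy : y ∈ X) (hz : z ∈ X), y * z = z * y →
      (commGraph X).Reachable ⟨y, hy⟩ ⟨z, hz⟩ := by
    intro y z hy hz hc
    by_cases he : y = z
    · exact commGraph_reach_congr X hy hy hy hz rfl he (Reachable.refl _)
    · exact SimpleGraph.Adj.reachable ⟨fun H => he (congrArg Subtype.val H), hc⟩
  -- the set of h with x reachable to h⁻¹xh is a subgroup
  let S : Subgroup G :=
    { carrier := {h : G | (commGraph X).Reachable ⟨x, hx⟩ ⟨h⁻¹ * x * h, hXconj h x hx⟩}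
      one_mem' := hrc x ((1:G)⁻¹ * x * 1) hx (hXconj 1 x hx) (by group)
      mul_mem' := by
        intro a b ha hb
        have step := commGraph_reach_conj X b (hXconj b) ha
        have := hb.trans step
        exact commGraph_reach_congr X hx _ hx (hXconj (a*b) x hx) rfl (by group) this
      inv_mem' := by
        intro a ha
        have step := commGraph_reach_conj X a⁻¹ (hXconj a⁻¹) ha
        have step2 : (commGraph X).Reachable ⟨a⁻¹⁻¹ * x * a⁻¹, hXconj a⁻¹ x hx⟩
            ⟨x, hx⟩ :=
          commGraph_reach_congr X _ _ (hXconj a⁻¹ x hx) hx rfl (by group) step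
        exact step2.symm }
  -- generators lie in S
  have hgmem : (commGraph X).Reachable ⟨x, hx⟩ ⟨g⁻¹ * x * g, hXconj g x hx⟩ :=
    hrc x (g⁻¹ * x * g) hx (hXconj g x hx) (hcomm x hxA _ (hg x hxA))
  have hAS : A ≤ S := by
    intro a ha
    have h1 : (commGraph X).Reachable ⟨g⁻¹ * x * g, hXconj g x hx⟩
        ⟨a⁻¹ * x * a, hXconj a x hx⟩ := by
      have hcxa : (g⁻¹ * x * g) * (a⁻¹ * x * a) = (a⁻¹ * x * a) * (g⁻¹ * x * g) :=
        (hcomm (a⁻¹ * x * a) (A.mul_mem (A.mul_mem (A.inv_mem ha) hxA) ha)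
          (g⁻¹ * x * g) (hg x hxA)).symm
      exact hrc _ _ (hXconj g x hx) (hXconj a x hx) hcxa
    exact hgmem.trans h1
  have hBS : B ≤ S := by
    intro b hb
    have : b⁻¹ * x * b = x := by
      have := hcomm x hxA b hb
      calc b⁻¹ * x * b = b⁻¹ * (x * b) := by group
        _ = b⁻¹ * (b * x) := by rw [this]
        _ = x := by group
    exact commGraph_reach_congr X hx hx hx (hXconj b x hx) rfl this.symm (Reachable.refl _)
  have hsup : (A ⊔ B) ⊔ Subgroup.zpowers g ≤ S :=
    sup_le (sup_le hAS hBS) (Subgroup.zpowers_le.mpr hgmem)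
  -- membership in S implies membership in conjStab
  have hstab : ∀ h : G, h ∈ S → h ∈ conjStab X x hx := by
    intro h hP
    have hP' : (commGraph X).Reachable ⟨x, hx⟩ ⟨h⁻¹ * x * h, hXconj h x hx⟩ := hP
    apply Set.eq_of_subset_of_subset
    · rintro _ ⟨y, ⟨hyX, hyr⟩, rfl⟩
      exact ⟨hXconj h y hyX, hP'.trans (commGraph_reach_conj X h (hXconj h) hyr)⟩
    · rintro z ⟨hzX, hzr⟩
      have hyX : h * z * h⁻¹ ∈ X := by simpa using hXconj h⁻¹ z hzX
      have hxX : h * x * h⁻¹ ∈ X := by simpa using hXconj h⁻¹ x hx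
      have r1 := commGraph_reach_conj X h⁻¹ (hXconj h⁻¹) hP'
      have r1c : (commGraph X).Reachable ⟨h * x * h⁻¹, hxX⟩ ⟨x, hx⟩ :=
        commGraph_reach_congr X _ _ hxX hx (by group) (by group) r1
      have r2 := commGraph_reach_conj X h⁻¹ (hXconj h⁻¹) hzr
      have r2c : (commGraph X).Reachable ⟨h * x * h⁻¹, hxX⟩ ⟨h * z * h⁻¹, hyX⟩ :=
        commGraph_reach_congr X _ _ hxX hyX (by group) (by group) r2
      exact ⟨h * z * h⁻¹, ⟨hyX, (r1c.symm).trans r2c⟩, by group⟩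
  exact ⟨fun h hh => hstab h (hsup hh), hgmem⟩
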